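/- Let A_{m,i}^k be defined by A_{0,0}^k = δ_{k,0}, A_{m,-1}^k = 0, A_{m,i}^{-1} = A_{m,i}^{-2} = 0, and A_{m,i}^k = (k-1)(A_{m-1,i}^{k-1} + A_{m-1,i}^{k-2} + A_{m-1,i-1}^{k-2}) + (k+i-m-1)·A_{m-1,i-1}^{k-1} for m ≥ 1. Then for all integers n ≥ m ≥ i ≥ 0: [n brack n-m+i] · [n-m+i brack n-m] = Σ_{k=0}^{2m} A_{m,i}^k · C(n,k), where [· brack ·] denotes unsigned Stirling numbers of the first kind and C(n,k) the binomial coefficient. -/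

import Mathlib

open Finset

/-- Unsigned Stirling numbers of the first kind. -/
def stir : ℕ → ℕ → ℕ
  | 0, 0 => 1
  | 0, _ + 1 => 0
  | _ + 1, 0 => 0
  | n + 1, i + 1 => stir n i + n * stir n (i + 1)

/-- The three-parameter family of integers `A_{m,i}^k`. -/
def A : ℕ → ℤ → ℤ → ℤ
  | 0, i, k => if i = 0 ∧ k = 0 then 1 else 0
  | m + 1, i, k =>
      if i < 0 ∨ k < 0 then 0
      else (k - 1) * (A m i (k - 1) + A m i (k - 2) + A m (i - 1) (k - 2))
            + (k + i - (m + 1) - 1) * A m (i - 1) (k - 1)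

open Polynomial

lemma stir_eq_zero_of_lt : ∀ n k : ℕ, n < k → stir n k = 0 := by
  intro n
  induction n with
  | zero => intro k hk; match k, hk with | k+1, _ => rfl
  | succ n ih =>
    intro k hk
    match k, hk with
    | k+1, hk =>
      have h1 : n < k := Nat.lt_of_succ_lt_succ hk
      simp [stir, ih k h1, ih (k+1) (Nat.lt_succ_of_lt h1)]

lemma stir_self (n : ℕ) : stir n n = 1 := by
  induction n with
  | zero => rfl
  | succ n ih => simp [stir, ih, stir_eq_zero_of_lt n (n+1) (Nat.lt_succ_self n)]

lemma stir_zero (n : ℕ) : stir (n+1) 0 = 0 := rfl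

lemma A_neg_k : ∀ (m : ℕ) (i k : ℤ), k < 0 → A m i k = 0 := by
  intro m i k hk
  cases m with
  | zero => simp [A]; omega
  | succ m => simp only [A]; rw [if_pos (Or.inr hk)]

lemma A_neg_i : ∀ (m : ℕ) (i k : ℤ), i < 0 → A m i k = 0 := by
  intro m i k hi
  cases m with
  | zero => simp [A]; omega
  | succ m => simp only [A]; rw [if_pos (Or.inl hi)]

lemma A_big_k : ∀ (m : ℕ) (i k : ℤ), 2 * (m : ℤ) < k → A m i k = 0 := by
  intro m
  induction m with
  | zero => intro i k hk; simp [A]; omega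
  | succ m ih =>
    intro i k hk
    simp only [A]
    rcases lt_or_ge i 0 with hi | hi
    · rw [if_pos (Or.inl hi)]
    · rw [if_neg (by omega)]
      rw [ih i (k-1) (by omega), ih i (k-2) (by omega), ih (i-1) (k-2) (by omega),
        ih (i-1) (k-1) (by omega)]
      ring

lemma A_big_i : ∀ (m : ℕ) (i k : ℤ), (m : ℤ) < i → A m i k = 0 := by
  intro m
  induction m with
  | zero => intro i k hi; simp [A]; omega
  | succ m ih =>
    intro i k hi
    simp only [A]
    rcases lt_or_ge k 0 with hk | hk
    · rw [if_pos (Or.inr hk)]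
    · rw [if_neg (by omega)]
      rw [ih i (k-1) (by omega), ih i (k-2) (by omega), ih (i-1) (k-2) (by omega),
        ih (i-1) (k-1) (by omega)]
      ring

lemma A_zero_k (m : ℕ) (i : ℤ) : A (m+1) i 0 = 0 := by
  simp only [A]
  rcases lt_or_ge i 0 with hi | hi
  · rw [if_pos (Or.inl hi)]
  · rw [if_neg (by omega)]
    rw [A_neg_k m i (0-1) (by omega), A_neg_k m i (0-2) (by omega),
      A_neg_k m (i-1) (0-2) (by omega), A_neg_k m (i-1) (0-1) (by omega)]
    ring

lemma poly_zero_of_tail (p : ℚ[X]) (N : ℕ) (h : ∀ n : ℕ, N ≤ n → p.eval (n : ℚ) = 0) :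
    p = 0 := by
  apply Polynomial.eq_zero_of_infinite_isRoot
  apply Set.infinite_of_injective_forall_mem (f := fun n : ℕ => ((n + N : ℕ) : ℚ))
  · intro a b hab
    have : (a + N : ℕ) = (b + N : ℕ) := Nat.cast_injective hab
    omega
  · intro n
    exact h (n + N) (by omega)

lemma poly_eq_of_tail (p q : ℚ[X]) (N : ℕ) (h : ∀ n : ℕ, N ≤ n → p.eval (n:ℚ) = q.eval (n:ℚ)) :
    p = q := by
  have := poly_zero_of_tail (p - q) N (by intro n hn; simp [h n hn])
  linear_combination (norm := ring_nf) this

-- antidifference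
lemma AD : ∀ (d : ℕ) (q : ℚ[X]), q.natDegree ≤ d →
    ∃ r : ℚ[X], ∀ x : ℚ, r.eval (x + 1) - r.eval x = q.eval x := by
  intro d
  induction d with
  | zero =>
    intro q hq
    refine ⟨C (q.coeff 0) * X, ?_⟩
    intro x
    rw [Polynomial.eq_C_of_natDegree_le_zero hq]
    simp
    ring
  | succ d ih =>
    intro q hq
    set c : ℚ := q.coeff (d+1) / (d+2) with hc
    set r0 : ℚ[X] := C c * X^(d+2) with hr0
    set q' : ℚ[X] := q - (r0.comp (X+1) - r0) with hq'
    have hcomp : r0.comp (X+1) = C c * (X+1)^(d+2) := by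
      simp [hr0]
    have hdeg : q'.natDegree ≤ d := by
      rw [Polynomial.natDegree_le_iff_coeff_eq_zero]
      intro N hN
      have hco : ((X + 1 : ℚ[X])^(d+2)).coeff N = ((d+2).choose N : ℚ) :=
        Polynomial.coeff_X_add_one_pow ℚ (d+2) N
      have hxp : ((X : ℚ[X])^(d+2)).coeff N = if N = d + 2 then 1 else 0 :=
        Polynomial.coeff_X_pow (d+2) N
      have hcoeff : q'.coeff N
          = q.coeff N - c * ((d+2).choose N : ℚ) + c * (if N = d + 2 then 1 else 0) := by
        simp [hq', hcomp, hr0, Polynomial.coeff_sub, Polynomial.coeff_C_mul, hco, hxp]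
        ring
      rcases Nat.lt_or_ge (d+2) N with hN2 | hN2
      · have h1 : q.coeff N = 0 := Polynomial.natDegree_le_iff_coeff_eq_zero.mp hq N (by omega)
        have h2 : (d+2).choose N = 0 := Nat.choose_eq_zero_of_lt hN2
        rw [hcoeff, h1, h2, if_neg (by omega)]
        simp
      · rcases Nat.eq_or_lt_of_le hN2 with hNe | hNlt
        · have h1 : q.coeff N = 0 := Polynomial.natDegree_le_iff_coeff_eq_zero.mp hq N (by omega)
          have h2 : (d+2).choose N = 1 := by rw [← hNe]; exact Nat.choose_self _
          rw [hcoeff, h1, h2, if_pos hNe]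
          simp
        · have hNe : N = d + 1 := by omega
          subst hNe
          have h2 : ((d+2).choose (d+1) : ℚ) = (d : ℚ) + 2 := by
            have h3 : (d+2).choose (d+1) = d + 2 := Nat.choose_succ_self_right (d+1)
            rw [h3]
            push_cast
            ring
          rw [hcoeff, h2, if_neg (by omega), hc]
          field_simp
          ring
    obtain ⟨r1, hr1⟩ := ih q' hdeg
    refine ⟨r1 + r0, ?_⟩
    intro x
    have h1 := hr1 x
    have h2 : q'.eval x = q.eval x - (r0.eval (x+1) - r0.eval x) := by
      simp [hq', Polynomial.eval_comp]
    simp only [Polynomial.eval_add]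
    rw [h2] at h1
    linarith

lemma exists_pp : ∀ j : ℕ, ∃ p : ℚ[X], ∀ x : ℕ, p.eval (x : ℚ) = stir (x + j) x := by
  intro j
  induction j with
  | zero =>
    exact ⟨1, by intro x; simp [stir_self]⟩
  | succ j ih =>
    obtain ⟨p, hp⟩ := ih
    set q : ℚ[X] := (X + C ((j:ℚ)+1)) * p.comp (X+1) with hq
    obtain ⟨r, hr⟩ := AD q.natDegree q le_rfl
    refine ⟨r - C (r.eval 0), ?_⟩
    intro x
    induction x with
    | zero => simp [stir]
    | succ x ihx =>
      have h2 : q.eval (x:ℚ) = ((x:ℚ) + j + 1) * stir (x+j+1) (x+1) := by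
        rw [hq]
        simp [Polynomial.eval_comp]
        rw [show ((x:ℚ)+1) = ((x+1 : ℕ) : ℚ) by push_cast; ring, hp (x+1)]
        rw [show x + 1 + j = x + j + 1 by omega]
        ring
      have h4 : ((x+1 : ℕ) : ℚ) = (x : ℚ) + 1 := by push_cast; ring
      have hrw : x + 1 + (j+1) = (x + j + 1) + 1 := by omega
      rw [hrw]
      have hstep : stir ((x+j+1)+1) (x+1) = stir (x+j+1) x + (x+j+1) * stir (x+j+1) (x+1) := rfl
      rw [hstep, h4]
      have h6 := hr (x:ℚ)
      rw [h2] at h6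
      have h5 : x + j + 1 = x + (j+1) := by omega
      rw [h5] at h6 ⊢
      simp only [Polynomial.eval_sub, Polynomial.eval_C] at ihx ⊢
      push_cast
      linarith [h6, ihx]

noncomputable def pp (j : ℕ) : ℚ[X] := (exists_pp j).choose

lemma pp_spec (j : ℕ) (x : ℕ) : (pp j).eval (x : ℚ) = stir (x + j) x :=
  (exists_pp j).choose_spec x

lemma pp_zero : pp 0 = 1 := by
  apply poly_eq_of_tail _ _ 0
  intro n _
  rw [pp_spec 0 n]
  simp [stir_self]

lemma pp_rec (j : ℕ) (x : ℚ) :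
    (pp (j+1)).eval (x + 1) = (pp (j+1)).eval x + (x + j + 1) * (pp j).eval (x + 1) := by
  have key : (pp (j+1)).comp (X + 1) = pp (j+1) + (X + C ((j:ℚ)+1)) * (pp j).comp (X + 1) := by
    apply poly_eq_of_tail _ _ 0
    intro n _
    simp only [Polynomial.eval_add, Polynomial.eval_mul, Polynomial.eval_comp,
      Polynomial.eval_X, Polynomial.eval_C, Polynomial.eval_one]
    rw [show (n:ℚ) + 1 = ((n+1 : ℕ) : ℚ) by push_cast; ring]
    rw [pp_spec (j+1) (n+1), pp_spec (j+1) n, pp_spec j (n+1)]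
    have hstep : stir (n + 1 + (j+1)) (n+1) = stir (n+j+1) n + (n+j+1) * stir (n+j+1) (n+1) := by
      rw [show n + 1 + (j+1) = (n+j+1)+1 by omega]
      rfl
    rw [show n + (j+1) = n + j + 1 by omega, show n + 1 + j = n + j + 1 by omega, hstep]
    push_cast
    ring
  have := congrArg (Polynomial.eval x) key
  simp only [Polynomial.eval_add, Polynomial.eval_mul, Polynomial.eval_comp,
    Polynomial.eval_X, Polynomial.eval_C, Polynomial.eval_one] at this
  rw [this]
  ring

lemma pp_vanish : ∀ j : ℕ, 1 ≤ j → ∀ t : ℕ, t ≤ j → (pp j).eval (-(t : ℚ)) = 0 := by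
  intro j
  induction j with
  | zero => omega
  | succ j ih =>
    intro _ t ht
    induction t with
    | zero =>
      have := pp_spec (j+1) 0
      simpa [stir] using this
    | succ t iht =>
      have h1 : (pp (j+1)).eval (-(t:ℚ)) = 0 := iht (by omega)
      have h2 := pp_rec j (-(((t:ℕ)+1 : ℕ) : ℚ))
      have h3 : (-(((t:ℕ)+1 : ℕ) : ℚ)) + 1 = -(t:ℚ) := by push_cast; ring
      rw [h3] at h2
      rw [h1] at h2
      have h4 : (pp j).eval (-(t:ℚ)) * ((-(((t:ℕ)+1 : ℕ):ℚ)) + (j:ℚ) + 1) = 0 := by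
        rcases Nat.lt_or_ge t j with hlt | hge
        · have hj1 : 1 ≤ j := by omega
          rw [ih hj1 t (le_of_lt hlt)]
          ring
        · have : t = j := by omega
          subst this
          have : (-(((t:ℕ)+1 : ℕ):ℚ)) + (t:ℚ) + 1 = 0 := by push_cast; ring
          rw [this]
          ring
      push_cast at h2 h4 ⊢
      rw [show (0:ℚ) = 0 + ((-(t:ℚ) - 1) + (j:ℚ) + 1) * (pp j).eval (-(t:ℚ)) by
        push_cast at h4; nlinarith [h4]] at h2
      linarith [h2]

noncomputable def Ppoly (m i : ℕ) : ℚ[X] :=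
  (pp (m-i)).comp (X + C ((i:ℚ) - (m:ℚ))) * (pp i).comp (X - C ((m:ℚ)))

lemma Ppoly_eval (m i n : ℕ) (hi : i ≤ m) (hm : m ≤ n) :
    (Ppoly m i).eval (n : ℚ) = (stir n (n-m+i) : ℚ) * (stir (n-m+i) (n-m) : ℚ) := by
  unfold Ppoly
  simp only [Polynomial.eval_mul, Polynomial.eval_comp, Polynomial.eval_add,
    Polynomial.eval_sub, Polynomial.eval_X, Polynomial.eval_C]
  rw [show (n:ℚ) + ((i:ℚ) - (m:ℚ)) = ((n-m+i : ℕ) : ℚ) by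
    rw [Nat.cast_add (n-m) i, Nat.cast_sub hm]; ring]
  rw [show (n:ℚ) - (m:ℚ) = ((n-m : ℕ) : ℚ) by rw [Nat.cast_sub hm]]
  rw [pp_spec (m-i) (n-m+i), pp_spec i (n-m)]
  rw [show n - m + i + (m - i) = n by omega]

lemma STAR (m b i : ℕ) :
    (stir (m+1+(b+1)) ((b+1)+i) * stir ((b+1)+i) (b+1) : ℚ)
      = stir (m+1+b) (b+i) * stir (b+i) b
        + ((b:ℚ)+i) * (stir (m+1+b) (b+i) * stir (b+i) (b+1))
        + ((m:ℚ)+1+b) * (stir (m+1+b) (b+1+i) * stir (b+1+i) (b+1)) := by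
  have e1 : stir (m+1+(b+1)) ((b+1)+i) = stir (m+1+b) (b+i) + (m+1+b) * stir (m+1+b) (b+i+1) := by
    rw [show m+1+(b+1) = (m+1+b)+1 by omega, show (b+1)+i = (b+i)+1 by omega]
    rfl
  have e2 : stir ((b+1)+i) (b+1) = stir (b+i) b + (b+i) * stir (b+i) (b+1) := by
    rw [show (b+1)+i = (b+i)+1 by omega]
    rfl
  rw [e1, e2, show b+1+i = b+i+1 by omega]
  push_cast
  ring

noncomputable def Ppred (m i : ℕ) : ℚ[X] := if i = 0 then 0 else Ppoly m (i-1)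
noncomputable def Pcur (m i : ℕ) : ℚ[X] := if i ≤ m then Ppoly m i else 0

lemma PREC (m i : ℕ) (hi : i ≤ m+1) (x : ℚ) :
    (Ppoly (m+1) i).eval (x+1) = (Ppoly (m+1) i).eval x
      + (x - ((m:ℚ)+1) + i) * (Ppred m i).eval x + x * (Pcur m i).eval x := by
  have key : (Ppoly (m+1) i).comp (X+1)
      = Ppoly (m+1) i + (X - C ((m:ℚ)+1) + C (i:ℚ)) * Ppred m i + X * Pcur m i := by
    apply poly_eq_of_tail _ _ (m+1)
    intro n hn
    set b : ℕ := n - (m+1) with hb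
    have hnb : n = m+1+b := by omega
    simp only [Polynomial.eval_add, Polynomial.eval_mul, Polynomial.eval_comp,
      Polynomial.eval_X, Polynomial.eval_C, Polynomial.eval_sub, Polynomial.eval_one]
    rw [show (n:ℚ) + 1 = ((n+1 : ℕ) : ℚ) by push_cast; ring]
    rw [Ppoly_eval (m+1) i (n+1) hi (by omega), Ppoly_eval (m+1) i n hi (by omega)]
    have hmid : ((n:ℚ) - ((m:ℚ)+1) + i) * (Ppred m i).eval (n:ℚ)
        = ((b:ℚ)+i) * (stir (m+1+b) (b+i) * stir (b+i) (b+1)) := by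
      cases i with
      | zero =>
        rw [show Ppred m 0 = 0 from if_pos rfl]
        rw [stir_eq_zero_of_lt (b+0) (b+1) (by omega)]
        simp
      | succ ι =>
        rw [show Ppred m (ι+1) = Ppoly m ι from by
          simp [Ppred]]
        rw [Ppoly_eval m ι n (by omega) (by omega)]
        rw [show n - m + ι = b + (ι+1) by omega, show n - m = b + 1 by omega, hnb]
        rw [show b + (ι+1) = b + 1 + ι by omega]
        push_cast
        ring
    have hlast : (n:ℚ) * (Pcur m i).eval (n:ℚ)
        = ((m:ℚ)+1+b) * (stir (m+1+b) (b+1+i) * stir (b+1+i) (b+1)) := by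
      rcases Nat.lt_or_ge m i with hcase | hcase
      · have : i = m+1 := by omega
        subst this
        simp only [Pcur, if_neg (by omega : ¬ m+1 ≤ m), Polynomial.eval_zero, mul_zero]
        rw [stir_eq_zero_of_lt (m+1+b) (b+1+(m+1)) (by omega)]
        push_cast
        ring
      · simp only [Pcur, if_pos hcase]
        rw [Ppoly_eval m i n hcase (by omega)]
        rw [show n - m + i = b + 1 + i by omega, show n - m = b + 1 by omega, hnb]
        push_cast
        ring
    rw [hmid, hlast]
    rw [show n + 1 - (m+1) + i = b+1+i by omega, show n + 1 - (m+1) = b+1 by omega,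
      show n - (m+1) + i = b+i by omega, show n - (m+1) = b by omega]
    rw [show n + 1 = m+1+(b+1) by omega]
    rw [hnb]
    rw [show b+1+i = (b+1)+i by omega]
    rw [STAR m b i]
  have := congrArg (Polynomial.eval x) key
  simp only [Polynomial.eval_add, Polynomial.eval_mul, Polynomial.eval_comp,
    Polynomial.eval_X, Polynomial.eval_C, Polynomial.eval_sub, Polynomial.eval_one] at this
  rw [this]

lemma hnck (n k : ℕ) : (n:ℚ) * (n.choose k : ℚ)
    = (k:ℚ) * (n.choose k : ℚ) + ((k:ℚ)+1) * (n.choose (k+1) : ℚ) := by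
  rcases le_or_gt k n with hkn | hkn
  · have h := Nat.choose_succ_right_eq n k
    have h2 := congrArg (Nat.cast : ℕ → ℚ) h
    push_cast [Nat.cast_sub hkn] at h2
    nlinarith [h2]
  · rw [Nat.choose_eq_zero_of_lt hkn, Nat.choose_eq_zero_of_lt (by omega : n < k+1)]
    simp

lemma A_succ (m i k : ℕ) :
    A (m+1) (i:ℤ) ((k:ℤ)+1) = (k:ℤ) * (A m i k + A m i ((k:ℤ)-1) + A m ((i:ℤ)-1) ((k:ℤ)-1))
      + ((k:ℤ) + i - m - 1) * A m ((i:ℤ)-1) (k:ℤ) := by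
  show (if (i:ℤ) < 0 ∨ ((k:ℤ)+1) < 0 then (0:ℤ) else _) = _
  rw [if_neg (by omega)]
  rw [show ((k:ℤ)+1-1) = (k:ℤ) by ring, show ((k:ℤ)+1-2) = (k:ℤ)-1 by ring]
  ring

lemma pad_sum (m n : ℕ) (j : ℤ) :
    (∑ k ∈ Finset.range (2*m+1), (A m j k : ℚ) * (n.choose k : ℚ))
      = ∑ k ∈ Finset.range (2*m+2), (A m j k : ℚ) * (n.choose k : ℚ) := by
  rw [show 2*m+2 = (2*m+1)+1 by omega,
    Finset.sum_range_succ (fun k => (A m j k : ℚ) * (n.choose k : ℚ)) (2*m+1)]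
  rw [A_big_k m j ((2*m+1 : ℕ) : ℤ) (by push_cast; omega)]
  simp

lemma mulk (m n : ℕ) (j : ℤ) :
    (n:ℚ) * (∑ k ∈ Finset.range (2*m+1), (A m j k : ℚ) * (n.choose k : ℚ))
      = ∑ k ∈ Finset.range (2*m+2),
          ((k:ℚ) * (A m j k : ℚ) + (k:ℚ) * (A m j ((k:ℤ)-1) : ℚ)) * (n.choose k : ℚ) := by
  rw [Finset.mul_sum]
  have step1 : ∀ k ∈ Finset.range (2*m+1),
      (n:ℚ) * ((A m j k : ℚ) * (n.choose k : ℚ))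
        = (k:ℚ) * (A m j k : ℚ) * (n.choose k : ℚ)
          + ((k:ℚ)+1) * (A m j k : ℚ) * (n.choose (k+1) : ℚ) := by
    intro k _
    rw [show (n:ℚ) * ((A m j k : ℚ) * (n.choose k : ℚ))
        = (A m j k : ℚ) * ((n:ℚ) * (n.choose k : ℚ)) by ring, hnck n k]
    ring
  rw [Finset.sum_congr rfl step1, Finset.sum_add_distrib]
  have e1 : (∑ k ∈ Finset.range (2*m+1), (k:ℚ) * (A m j k : ℚ) * (n.choose k : ℚ))
      = ∑ k ∈ Finset.range (2*m+2), (k:ℚ) * (A m j k : ℚ) * (n.choose k : ℚ) := by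
    rw [show 2*m+2 = (2*m+1)+1 by omega,
      Finset.sum_range_succ (fun k => (k:ℚ) * (A m j k : ℚ) * (n.choose k : ℚ)) (2*m+1)]
    rw [A_big_k m j ((2*m+1 : ℕ) : ℤ) (by push_cast; omega)]
    simp
  have e2 : (∑ k ∈ Finset.range (2*m+1), ((k:ℚ)+1) * (A m j k : ℚ) * (n.choose (k+1) : ℚ))
      = ∑ k ∈ Finset.range (2*m+2), (k:ℚ) * (A m j ((k:ℤ)-1) : ℚ) * (n.choose k : ℚ) := by
    rw [show 2*m+2 = (2*m+1)+1 by omega]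
    rw [Finset.sum_range_succ' (fun k => (k:ℚ) * (A m j ((k:ℤ)-1) : ℚ) * (n.choose k : ℚ)) (2*m+1)]
    simp only [Nat.cast_zero, zero_mul, add_zero, mul_zero]
    apply Finset.sum_congr rfl
    intro k _
    have : ((k+1 : ℕ) : ℤ) - 1 = (k : ℤ) := by push_cast; ring
    rw [this]
    push_cast
    ring
  rw [e1, e2]
  rw [← Finset.sum_add_distrib]
  apply Finset.sum_congr rfl
  intro k _
  ring

lemma diff_sum (m i n : ℕ) :
    (∑ k ∈ Finset.range (2*(m+1)+1), (A (m+1) i k : ℚ) * ((n+1).choose k : ℚ))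
      = (∑ k ∈ Finset.range (2*(m+1)+1), (A (m+1) i k : ℚ) * (n.choose k : ℚ))
        + ∑ k ∈ Finset.range (2*m+2), (A (m+1) (i:ℤ) ((k:ℤ)+1) : ℚ) * (n.choose k : ℚ) := by
  have h : ∀ k ∈ Finset.range (2*(m+1)+1),
      (A (m+1) i k : ℚ) * ((n+1).choose k : ℚ)
        = (A (m+1) i k : ℚ) * (n.choose k : ℚ)
          + (fun (k : ℕ) => (A (m+1) (i:ℤ) (k:ℤ) : ℚ) * ((n.choose (k-1) : ℕ) : ℚ) * (if k = 0 then 0 else 1)) k := by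
    intro k _
    cases k with
    | zero => simp
    | succ k =>
      simp only [if_neg (Nat.succ_ne_zero k), mul_one, Nat.succ_sub_one]
      rw [Nat.choose_succ_succ n k]
      push_cast
      ring
  rw [Finset.sum_congr rfl h, Finset.sum_add_distrib]
  congr 1
  rw [show 2*(m+1)+1 = (2*m+2)+1 by omega]
  rw [Finset.sum_range_succ'
    (fun (k : ℕ) => (A (m+1) (i:ℤ) (k:ℤ) : ℚ) * ((n.choose (k-1) : ℕ) : ℚ) * (if k = 0 then 0 else 1)) (2*m+2)]
  simp only [Nat.add_sub_cancel, mul_one, mul_zero, add_zero, if_true, eq_self_iff_true]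
  apply Finset.sum_congr rfl
  intro k _
  have : (((k+1 : ℕ)) : ℤ) = (k:ℤ)+1 := by push_cast; ring
  rw [this, if_neg (Nat.succ_ne_zero k), mul_one]

lemma QS (m i n : ℕ) :
    (∑ k ∈ Finset.range (2*(m+1)+1), (A (m+1) i k : ℚ) * ((n+1).choose k : ℚ))
      = (∑ k ∈ Finset.range (2*(m+1)+1), (A (m+1) i k : ℚ) * (n.choose k : ℚ))
        + ((n:ℚ) - ((m:ℚ)+1) + i) * (∑ k ∈ Finset.range (2*m+1), (A m ((i:ℤ)-1) k : ℚ) * (n.choose k : ℚ))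
        + (n:ℚ) * (∑ k ∈ Finset.range (2*m+1), (A m i k : ℚ) * (n.choose k : ℚ)) := by
  rw [diff_sum m i n]
  have expand : ((n:ℚ) - ((m:ℚ)+1) + i) * (∑ k ∈ Finset.range (2*m+1), (A m ((i:ℤ)-1) k : ℚ) * (n.choose k : ℚ))
      = (n:ℚ) * (∑ k ∈ Finset.range (2*m+1), (A m ((i:ℤ)-1) k : ℚ) * (n.choose k : ℚ))
        + ((i:ℚ) - ((m:ℚ)+1)) * (∑ k ∈ Finset.range (2*m+2), (A m ((i:ℤ)-1) k : ℚ) * (n.choose k : ℚ)) := by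
    rw [← pad_sum]
    ring
  rw [expand, mulk m n ((i:ℤ)-1), mulk m n (i:ℤ), Finset.mul_sum]
  rw [add_assoc, add_assoc, ← Finset.sum_add_distrib, ← Finset.sum_add_distrib]
  congr 1
  apply Finset.sum_congr rfl
  intro k _
  rw [A_succ m i k]
  push_cast
  ring

lemma MAIN : ∀ m i n : ℕ, i ≤ m →
    (Ppoly m i).eval (n:ℚ) = ∑ k ∈ Finset.range (2*m+1), (A m i k : ℚ) * (n.choose k : ℚ) := by
  intro m
  induction m with
  | zero =>
    intro i n hi
    have : i = 0 := by omega
    subst this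
    unfold Ppoly
    simp [pp_zero, A]
  | succ m ih =>
    intro i n hi
    induction n with
    | zero =>
      have hL : (Ppoly (m+1) i).eval ((0:ℕ):ℚ) = 0 := by
        unfold Ppoly
        simp only [Polynomial.eval_mul, Polynomial.eval_comp, Polynomial.eval_add,
          Polynomial.eval_sub, Polynomial.eval_X, Polynomial.eval_C, Nat.cast_zero]
        rcases Nat.eq_or_lt_of_le hi with he | hlt
        · subst he
          rw [show (0:ℚ) - ((m+1 : ℕ):ℚ) = -(((m+1 : ℕ)):ℚ) by ring]
          rw [pp_vanish (m+1) (by omega) (m+1) le_rfl]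
          ring
        · rw [show (0:ℚ) + ((i:ℚ) - ((m+1 : ℕ):ℚ)) = -(((m+1-i : ℕ)):ℚ) by
            rw [Nat.cast_sub (by omega)]; push_cast; ring]
          rw [pp_vanish (m+1-i) (by omega) (m+1-i) le_rfl]
          ring
      rw [hL]
      symm
      rw [Finset.sum_eq_single_of_mem 0 (Finset.mem_range.mpr (by omega))]
      · rw [show ((0:ℕ):ℤ) = (0:ℤ) from Nat.cast_zero, A_zero_k m i]
        simp
      · intro k _ hk
        match k, hk with
        | k+1, _ => simp [Nat.choose]
    | succ n ihn =>
      have hP := PREC m i hi (n:ℚ)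
      rw [show (n:ℚ) + 1 = ((n+1 : ℕ):ℚ) by push_cast; ring] at hP
      have hpred : (Ppred m i).eval (n:ℚ)
          = ∑ k ∈ Finset.range (2*m+1), (A m ((i:ℤ)-1) k : ℚ) * (n.choose k : ℚ) := by
        cases i with
        | zero =>
          rw [show Ppred m 0 = 0 from if_pos rfl]
          symm
          simp only [Polynomial.eval_zero]
          apply Finset.sum_eq_zero
          intro k _
          rw [A_neg_i m (((0:ℕ):ℤ)-1) k (by omega)]
          simp
        | succ ι =>
          rw [show Ppred m (ι+1) = Ppoly m ι from by simp [Ppred]]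
          rw [ih ι n (by omega)]
          rw [show ((ι+1 : ℕ):ℤ) - 1 = (ι:ℤ) by push_cast; ring]
      have hcur : (Pcur m i).eval (n:ℚ)
          = ∑ k ∈ Finset.range (2*m+1), (A m (i:ℤ) k : ℚ) * (n.choose k : ℚ) := by
        rcases Nat.lt_or_ge m i with hgt | hle
        · have : i = m+1 := by omega
          subst this
          rw [show Pcur m (m+1) = 0 from if_neg (by omega)]
          symm
          simp only [Polynomial.eval_zero]
          apply Finset.sum_eq_zero
          intro k _
          rw [A_big_i m ((m+1 : ℕ):ℤ) k (by push_cast; omega)]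
          simp
        · rw [show Pcur m i = Ppoly m i from if_pos hle]
          exact ih i n hle
      rw [hP, ihn, hpred, hcur, QS m i n]

theorem stmt_6 (n m i : ℕ) (hi : i ≤ m) (hm : m ≤ n) :
    (stir n (n - m + i) * stir (n - m + i) (n - m) : ℤ)
      = ∑ k ∈ Finset.range (2 * m + 1), A m i k * (n.choose k : ℤ) := by
  have h1 := Ppoly_eval m i n hi hm
  have h2 := MAIN m i n hi
  rw [h1] at h2
  have h3 : ((stir n (n-m+i) * stir (n-m+i) (n-m) : ℤ) : ℚ)
      = ((∑ k ∈ Finset.range (2*m+1), A m i k * (n.choose k : ℤ) : ℤ) : ℚ) := by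
    push_cast
    rw [h2]
  exact_mod_cast h3
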